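/- In Example 2 under the stated parameter assumptions, the modified convex hull total uplift equals w²/(a·d_max) and is at most w/6, whereas the convex hull total uplift exceeds w/2; hence the modified total uplift is strictly smaller. -/

import Mathlib

set_option maxHeartbeats 1000000 in
/-- Example 2 comparison: the modified convex hull total uplift equals `w²/(a·d_max)`
(consumer uplift; producer uplift vanishes at the modified price `p̃⁺ = a + 2w/d_max`)
and is at most `w/6`, whereas the convex hull total uplift exceeds `w/2`; hence the
modified total uplift is strictly smaller. -/
theorem stmt13 (a w gmax dmax : ℝ)
    (ha : 0 < a) (hw : 0 < w) (h1 : 6 * w / a ≤ dmax) (h2 : dmax < gmax)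
    (B : ℝ → ℝ) (hB : B = fun d => 2 * a * d - a * d ^ 2 / dmax)
    (gbar : ℝ) (hgbar : gbar = dmax * (1 - Real.sqrt (1 - 4 * w / (a * dmax))) / 2)
    (ptilde : ℝ) (hpt : ptilde = a + 2 * w / dmax)
    (CHgap Mgap : ℝ)
    (hCH : CHgap = w * (1 - dmax / (2 * gmax) + w * dmax / (4 * a * gmax ^ 2)))
    (hM : Mgap = w ^ 2 / (a * dmax)) :
    -- consumer uplift in the modified method equals `Mgap`
    sSup {v | ∃ d ∈ insert (0:ℝ) (Set.Icc gbar (dmax / 2)), v = B d - ptilde * d}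
        - (B (dmax / 2) - ptilde * (dmax / 2)) = Mgap ∧
    -- producer uplift in the modified method is zero
    sSup {v | ∃ x : ℝ × ℝ, (x = (0, 0) ∨ (x.1 = 1 ∧ x.2 ∈ Set.Icc gbar (dmax / 2))) ∧
        v = ptilde * x.2 - a * x.2 - w * x.1}
      = ptilde * (dmax / 2) - a * (dmax / 2) - w ∧
    ptilde * (dmax / 2) - a * (dmax / 2) - w = 0 ∧
    Mgap ≤ w / 6 ∧ w / 2 < CHgap ∧ Mgap < CHgap := by
  subst hB hpt hCH hM hgbar
  have hw6 : (0:ℝ) < 6 * w / a := by positivity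
  have hd : 0 < dmax := lt_of_lt_of_le hw6 h1
  have h0 : (0:ℝ) < a * dmax := by positivity
  have had : 6 * w ≤ a * dmax := by
    rw [div_le_iff₀ ha] at h1; nlinarith
  have hg : 0 < gmax := hd.trans h2
  have hrad : (0:ℝ) ≤ 1 - 4 * w / (a * dmax) := by
    rw [sub_nonneg, div_le_one h0]; linarith
  set s := Real.sqrt (1 - 4 * w / (a * dmax)) with hs
  have hs2 : s ^ 2 = 1 - 4 * w / (a * dmax) := Real.sq_sqrt hrad
  have hu : w / (a * dmax) ≤ 1 / 6 := by rw [div_le_iff₀ h0]; linarith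
  have hu0 : 0 < w / (a * dmax) := by positivity
  have hsge : 2 * w / (a * dmax) ≤ s := by
    have h4u : (2 * w / (a * dmax)) ^ 2 ≤ 1 - 4 * w / (a * dmax) := by
      have e1 : (2 * w / (a * dmax)) ^ 2 = 4 * (w / (a * dmax)) ^ 2 := by ring
      have e2 : 4 * w / (a * dmax) = 4 * (w / (a * dmax)) := by ring
      rw [e1, e2]
      nlinarith [hu, hu0]
    calc 2 * w / (a * dmax) = Real.sqrt ((2 * w / (a * dmax)) ^ 2) := by
          rw [Real.sqrt_sq (by positivity)]
      _ ≤ s := Real.sqrt_le_sqrt h4u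
  -- vertex
  set dv : ℝ := dmax / 2 - w / a with hdv
  set V : ℝ := a * dmax / 4 - w + w ^ 2 / (a * dmax) with hV
  have key : ∀ d : ℝ, (2 * a * d - a * d ^ 2 / dmax) - (a + 2 * w / dmax) * d ≤ V := by
    intro d
    rw [← sub_nonneg]
    have heq : V - ((2 * a * d - a * d ^ 2 / dmax) - (a + 2 * w / dmax) * d)
        = (a * (dmax / 2 - d) - w) ^ 2 / (a * dmax) := by
      rw [hV]
      field_simp
      ring
    rw [heq]
    positivity
  have hgdv : dmax * (1 - s) / 2 ≤ dv := by
    have h1' : dmax * (2 * w / (a * dmax)) / 2 ≤ dmax * s / 2 := by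
      gcongr
    have h2' : dmax * (2 * w / (a * dmax)) / 2 = w / a := by
      field_simp
    rw [h2'] at h1'
    rw [hdv]
    linarith
  have hdvle : dv ≤ dmax / 2 := by
    have : 0 < w / a := by positivity
    linarith
  have hval : (2 * a * dv - a * dv ^ 2 / dmax) - (a + 2 * w / dmax) * dv = V := by
    rw [hdv, hV]
    field_simp
    ring
  have hmem : V ∈ {v | ∃ d ∈ insert (0:ℝ) (Set.Icc (dmax * (1 - s) / 2) (dmax / 2)),
      v = (fun d => 2 * a * d - a * d ^ 2 / dmax) d - (a + 2 * w / dmax) * d} :=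
    ⟨dv, Set.mem_insert_iff.mpr (Or.inr ⟨hgdv, hdvle⟩), hval.symm⟩
  have hsup1 : sSup {v | ∃ d ∈ insert (0:ℝ) (Set.Icc (dmax * (1 - s) / 2) (dmax / 2)),
      v = (fun d => 2 * a * d - a * d ^ 2 / dmax) d - (a + 2 * w / dmax) * d} = V := by
    apply le_antisymm
    · apply csSup_le ⟨V, hmem⟩
      rintro v ⟨d, -, rfl⟩
      exact key d
    · exact le_csSup ⟨V, by rintro v ⟨d, -, rfl⟩; exact key d⟩ hmem
  have hprod0 : (a + 2 * w / dmax) * (dmax / 2) - a * (dmax / 2) - w = 0 := by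
    field_simp [hd.ne']
    try ring
  have hsup2 : sSup {v | ∃ x : ℝ × ℝ,
      (x = (0, 0) ∨ (x.1 = 1 ∧ x.2 ∈ Set.Icc (dmax * (1 - s) / 2) (dmax / 2))) ∧
      v = (a + 2 * w / dmax) * x.2 - a * x.2 - w * x.1} = 0 := by
    have hmem0 : (0:ℝ) ∈ {v | ∃ x : ℝ × ℝ,
        (x = (0, 0) ∨ (x.1 = 1 ∧ x.2 ∈ Set.Icc (dmax * (1 - s) / 2) (dmax / 2))) ∧
        v = (a + 2 * w / dmax) * x.2 - a * x.2 - w * x.1} :=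
      ⟨(0, 0), Or.inl rfl, by norm_num⟩
    have hub : ∀ v ∈ {v | ∃ x : ℝ × ℝ,
        (x = (0, 0) ∨ (x.1 = 1 ∧ x.2 ∈ Set.Icc (dmax * (1 - s) / 2) (dmax / 2))) ∧
        v = (a + 2 * w / dmax) * x.2 - a * x.2 - w * x.1}, v ≤ 0 := by
      rintro v ⟨⟨x1, x2⟩, hx, rfl⟩
      rcases hx with hx | ⟨h1x, h2x⟩
      · simp only [Prod.mk.injEq] at hx
        rw [hx.1, hx.2]; norm_num
      · simp only at h1x h2x
        rw [h1x]
        have hx2 : x2 ≤ dmax / 2 := h2x.2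
        have : (a + 2 * w / dmax) * x2 - a * x2 = 2 * w / dmax * x2 := by ring
        rw [this]
        have h2w : 2 * w / dmax * x2 ≤ 2 * w / dmax * (dmax / 2) :=
          mul_le_mul_of_nonneg_left hx2 (by positivity)
        have : 2 * w / dmax * (dmax / 2) = w := by field_simp
        nlinarith
    exact le_antisymm (csSup_le ⟨0, hmem0⟩ hub) (le_csSup ⟨0, hub⟩ hmem0)
  have hM6 : w ^ 2 / (a * dmax) ≤ w / 6 := by
    rw [div_le_div_iff₀ h0 (by norm_num)]
    nlinarith [mul_le_mul_of_nonneg_left had hw.le]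
  have hCHgt : w / 2 < w * (1 - dmax / (2 * gmax) + w * dmax / (4 * a * gmax ^ 2)) := by
    have hdg : dmax / (2 * gmax) < 1 / 2 := by
      rw [div_lt_div_iff₀ (by positivity) (by norm_num)]
      linarith
    have hpos : 0 < w * dmax / (4 * a * gmax ^ 2) := by positivity
    have hhalf : (1:ℝ) / 2 < 1 - dmax / (2 * gmax) + w * dmax / (4 * a * gmax ^ 2) := by
      linarith
    have := (mul_lt_mul_iff_right₀ hw).mpr hhalf
    linarith
  refine ⟨?_, ?_, hprod0, hM6, hCHgt, by linarith⟩
  · rw [hsup1, hV]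
    have : (fun d => 2 * a * d - a * d ^ 2 / dmax) (dmax / 2)
        - (a + 2 * w / dmax) * (dmax / 2) = a * dmax / 4 - w := by
      field_simp [hd.ne']
      try ring
    rw [this]
    ring
  · rw [hsup2, hprod0]
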